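/- Let d ≥ 1, let σ ∈ S_d, and let c₁, c₂, c₃ be three pairwise distinct cycle factors of σ. Let τ = (a b c) be a 3-cycle with a in the support of c₁, b in the support of c₂, and c in the support of c₃. Then the disjoint cycle decomposition of τ∘σ consists of all cycle factors of σ other than c₁, c₂, c₃, together with one single cycle whose support is the union of the supports of c₁, c₂ and c₃. -/

import Mathlib

open Equiv Equiv.Perm

open Finset
variable {α : Type*} [DecidableEq α] [Fintype α]

lemma join_two (c d : Perm α) (hc : c.IsCycle) (hd : d.IsCycle) (hcd : Perm.Disjoint c d)
    (x y : α) (hx : x ∈ c.support) (hy : y ∈ d.support) :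
    (Equiv.swap x y * (d * c)).IsCycle ∧
      (Equiv.swap x y * (d * c)).support = c.support ∪ d.support := by
  set g := Equiv.swap x y * (d * c) with hg
  have hsupp : _root_.Disjoint c.support d.support :=
    Perm.disjoint_iff_disjoint_support.mp hcd
  have hxy : x ≠ y := fun h => Finset.disjoint_left.mp hsupp hx (h ▸ hy)
  -- pointwise formulas
  have hA : ∀ z ∈ c.support, g z = if c z = x then y else c z := by
    intro z hz
    have hcz : c z ∈ c.support := apply_mem_support.mpr hz
    have hdz : d (c z) = c z := by
      rw [← notMem_support]
      exact fun h => Finset.disjoint_left.mp hsupp hcz h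
    have hczy : c z ≠ y := fun h => Finset.disjoint_left.mp hsupp hcz (h ▸ hy)
    simp only [hg, Perm.mul_apply, hdz]
    by_cases h : c z = x
    · simp [h]
    · rw [if_neg h]; simp [Equiv.swap_apply_of_ne_of_ne h hczy]
  have hB : ∀ z ∈ d.support, g z = if d z = y then x else d z := by
    intro z hz
    have hcz : c z = z := by
      rw [← notMem_support]
      exact fun h => Finset.disjoint_left.mp hsupp h hz
    have hdz : d z ∈ d.support := apply_mem_support.mpr hz
    have hdzx : d z ≠ x := fun h => Finset.disjoint_left.mp hsupp hx (h ▸ hdz)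
    simp only [hg, Perm.mul_apply, hcz]
    by_cases h : d z = y
    · simp [h]
    · rw [if_neg h]; simp [Equiv.swap_apply_of_ne_of_ne hdzx h]
  have hC : ∀ z, z ∉ c.support → z ∉ d.support → g z = z := by
    intro z hz1 hz2
    have hcz : c z = z := notMem_support.mp hz1
    have hdz : d z = z := notMem_support.mp hz2
    have hzx : z ≠ x := fun h => hz1 (h ▸ hx)
    have hzy : z ≠ y := fun h => hz2 (h ▸ hy)
    simp [hg, Perm.mul_apply, hcz, hdz, Equiv.swap_apply_of_ne_of_ne hzx hzy]
  -- support
  have hsup : g.support = c.support ∪ d.support := by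
    ext z
    simp only [mem_support, Finset.mem_union]
    constructor
    · intro h
      by_contra h'
      push_neg at h'
      exact h (hC z (notMem_support.mpr h'.1) (notMem_support.mpr h'.2))
    · rintro (h | h)
      · rw [hA z (mem_support.mpr h)]
        split_ifs with h'
        · exact fun hyz => Finset.disjoint_left.mp hsupp (mem_support.mpr h) (hyz ▸ hy)
        · exact h
      · rw [hB z (mem_support.mpr h)]
        split_ifs with h'
        · exact fun hxz => Finset.disjoint_left.mp hsupp (hxz ▸ hx) (mem_support.mpr h)
        · exact h
  -- reachability from x
  have hreachC : ∀ n : ℕ, SameCycle g x ((c ^ n) x) := by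
    intro n
    induction n with
    | zero => simpa using SameCycle.refl g x
    | succ n ih =>
      by_cases h : (c ^ (n + 1)) x = x
      · rw [h]
      · have hmem : (c ^ n) x ∈ c.support := pow_apply_mem_support.mpr hx
        obtain ⟨m, hm⟩ := ih
        refine ⟨1 + m, ?_⟩
        rw [zpow_add, zpow_one, Perm.mul_apply, hm, hA _ hmem, if_neg, ← Perm.mul_apply,
          ← pow_succ']
        intro h'
        exact h (by rw [pow_succ', Perm.mul_apply, h'])
  have hx' : c x ≠ x := mem_support.mp hx
  have hy' : d y ≠ y := mem_support.mp hy
  have hCsub : ∀ z ∈ c.support, SameCycle g x z := by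
    intro z hz
    obtain ⟨n, -, -, hn⟩ := (hc.sameCycle hx' (mem_support.mp hz)).exists_pow_eq c
    exact hn ▸ hreachC n
  -- y is reachable
  have hyreach : SameCycle g x y := by
    have hz0 : c⁻¹ x ∈ c.support := by
      rw [← support_inv]; exact apply_mem_support.mpr (by rwa [support_inv])
    obtain ⟨m, hm⟩ := hCsub _ hz0
    refine ⟨1 + m, ?_⟩
    rw [zpow_add, zpow_one, Perm.mul_apply, hm, hA _ hz0, if_pos (show c (c⁻¹ x) = x by simp)]
  have hreachD : ∀ n : ℕ, SameCycle g x ((d ^ n) y) := by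
    intro n
    induction n with
    | zero => simpa using hyreach
    | succ n ih =>
      by_cases h : (d ^ (n + 1)) y = y
      · rw [h]; exact hyreach
      · have hmem : (d ^ n) y ∈ d.support := pow_apply_mem_support.mpr hy
        obtain ⟨m, hm⟩ := ih
        refine ⟨1 + m, ?_⟩
        rw [zpow_add, zpow_one, Perm.mul_apply, hm, hB _ hmem, if_neg, ← Perm.mul_apply,
          ← pow_succ']
        intro h'
        exact h (by rw [pow_succ', Perm.mul_apply, h'])
  have hDsub : ∀ z ∈ d.support, SameCycle g x z := by
    intro z hz
    obtain ⟨n, -, -, hn⟩ := (hd.sameCycle hy' (mem_support.mp hz)).exists_pow_eq d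
    exact hn ▸ hreachD n
  refine ⟨⟨x, ?_, ?_⟩, hsup⟩
  · exact mem_support.mp (hsup ▸ Finset.mem_union_left _ hx)
  · intro z hz
    have : z ∈ c.support ∪ d.support := hsup ▸ mem_support.mpr hz
    rcases Finset.mem_union.mp this with h | h
    · exact hCsub z h
    · exact hDsub z h


/-- if the three entries of the 3-cycle `τ = (a b c) = swap a c * swap a b`
lie in three distinct cycle factors `c₁, c₂, c₃` of `σ`, then the disjoint cycle
decomposition of `τ∘σ` consists of the cycle factors of `σ` other than `c₁, c₂, c₃`
together with a single cycle whose support is the union of the three supports. -/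
theorem three_cycle_joins_three_cycle_factors
    (d : ℕ) (hd : 1 ≤ d) (σ : Perm (Fin d))
    (c₁ c₂ c₃ : Perm (Fin d))
    (h₁ : c₁ ∈ σ.cycleFactorsFinset) (h₂ : c₂ ∈ σ.cycleFactorsFinset)
    (h₃ : c₃ ∈ σ.cycleFactorsFinset)
    (h12 : c₁ ≠ c₂) (h13 : c₁ ≠ c₃) (h23 : c₂ ≠ c₃)
    (a b c : Fin d) (hab : a ≠ b) (hac : a ≠ c) (hbc : b ≠ c)
    (ha : a ∈ c₁.support) (hb : b ∈ c₂.support) (hc : c ∈ c₃.support)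
    (τ : Perm (Fin d)) (hτ : τ = Equiv.swap a c * Equiv.swap a b) :
    ∃ f : Perm (Fin d), f.IsCycle ∧
      f.support = c₁.support ∪ c₂.support ∪ c₃.support ∧
      (τ * σ).cycleFactorsFinset = insert f (σ.cycleFactorsFinset \ {c₁, c₂, c₃}) := by
  classical
  have pd := σ.cycleFactorsFinset_pairwise_disjoint
  have d12 : Perm.Disjoint c₁ c₂ := pd h₁ h₂ h12
  have d13 : Perm.Disjoint c₁ c₃ := pd h₁ h₃ h13
  have d23 : Perm.Disjoint c₂ c₃ := pd h₂ h₃ h23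
  have hc1 : c₁.IsCycle := (mem_cycleFactorsFinset_iff.mp h₁).1
  have hc2 : c₂.IsCycle := (mem_cycleFactorsFinset_iff.mp h₂).1
  have hc3 : c₃.IsCycle := (mem_cycleFactorsFinset_iff.mp h₃).1
  have hs12 := Perm.disjoint_iff_disjoint_support.mp d12
  have hs13 := Perm.disjoint_iff_disjoint_support.mp d13
  have hs23 := Perm.disjoint_iff_disjoint_support.mp d23
  have ha2 : a ∉ c₂.support := Finset.disjoint_left.mp hs12 ha
  have ha3 : a ∉ c₃.support := Finset.disjoint_left.mp hs13 ha
  have hb1 : b ∉ c₁.support := Finset.disjoint_right.mp hs12 hb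
  have hb3 : b ∉ c₃.support := Finset.disjoint_left.mp hs23 hb
  have hc1' : c ∉ c₁.support := Finset.disjoint_right.mp hs13 hc
  have hc2' : c ∉ c₂.support := Finset.disjoint_right.mp hs23 hc
  -- the complementary permutation ρ
  set ρ : Perm (Fin d) := σ * c₁⁻¹ * c₂⁻¹ * c₃⁻¹ with hρ
  have s1 : (σ * c₁⁻¹).cycleFactorsFinset = σ.cycleFactorsFinset \ {c₁} :=
    cycleFactorsFinset_mul_inv_mem_eq_sdiff h₁
  have h₂' : c₂ ∈ (σ * c₁⁻¹).cycleFactorsFinset := by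
    rw [s1, Finset.mem_sdiff, Finset.mem_singleton]; exact ⟨h₂, h12.symm⟩
  have s2 : (σ * c₁⁻¹ * c₂⁻¹).cycleFactorsFinset =
      (σ.cycleFactorsFinset \ {c₁}) \ {c₂} := by
    rw [cycleFactorsFinset_mul_inv_mem_eq_sdiff h₂', s1]
  have h₃' : c₃ ∈ (σ * c₁⁻¹ * c₂⁻¹).cycleFactorsFinset := by
    rw [s2, Finset.mem_sdiff, Finset.mem_sdiff, Finset.mem_singleton, Finset.mem_singleton]
    exact ⟨⟨h₃, h13.symm⟩, h23.symm⟩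
  have hρcf : ρ.cycleFactorsFinset = σ.cycleFactorsFinset \ {c₁, c₂, c₃} := by
    rw [hρ, cycleFactorsFinset_mul_inv_mem_eq_sdiff h₃', s2]
    ext z
    simp only [Finset.mem_sdiff, Finset.mem_singleton, Finset.mem_insert]
    tauto
  -- disjointness of ρ from the three cycles
  have dρ1 : Perm.Disjoint ρ c₁ :=
    ((disjoint_mul_inv_of_mem_cycleFactorsFinset h₁).mul_left d12.symm.inv_left).mul_left
      d13.symm.inv_left
  have dρ2 : Perm.Disjoint ρ c₂ :=
    (disjoint_mul_inv_of_mem_cycleFactorsFinset h₂').mul_left d23.symm.inv_left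
  have dρ3 : Perm.Disjoint ρ c₃ := disjoint_mul_inv_of_mem_cycleFactorsFinset h₃'
  have hσeq : σ = ρ * c₃ * c₂ * c₁ := by rw [hρ]; group
  -- join c₁ and c₂
  obtain ⟨hg₁cyc, hg₁sup⟩ := join_two c₁ c₂ hc1 hc2 d12 a b ha hb
  set g₁ : Perm (Fin d) := Equiv.swap a b * (c₂ * c₁) with hg₁
  have dg₁3 : Perm.Disjoint g₁ c₃ := by
    rw [Perm.disjoint_iff_disjoint_support, hg₁sup, Finset.disjoint_union_left]
    exact ⟨hs13, hs23⟩
  have ha_g₁ : a ∈ g₁.support := hg₁sup ▸ Finset.mem_union_left _ ha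
  -- join with c₃
  obtain ⟨hfcyc, hfsup⟩ := join_two g₁ c₃ hg₁cyc hc3 dg₁3 a c ha_g₁ hc
  set f : Perm (Fin d) := Equiv.swap a c * (c₃ * g₁) with hf
  have hfsup' : f.support = c₁.support ∪ c₂.support ∪ c₃.support := by
    rw [hfsup, hg₁sup]
  -- commutation facts
  have e1 : ρ * Equiv.swap a c = Equiv.swap a c * ρ := by
    refine (Perm.Disjoint.commute ?_).eq
    intro z
    by_cases hza : z = a
    · exact Or.inl (hza ▸ (dρ1 a).resolve_right (mem_support.mp ha))
    · by_cases hzc : z = c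
      · exact Or.inl (hzc ▸ (dρ3 c).resolve_right (mem_support.mp hc))
      · exact Or.inr (Equiv.swap_apply_of_ne_of_ne hza hzc)
  have e2 : ρ * Equiv.swap a b = Equiv.swap a b * ρ := by
    refine (Perm.Disjoint.commute ?_).eq
    intro z
    by_cases hza : z = a
    · exact Or.inl (hza ▸ (dρ1 a).resolve_right (mem_support.mp ha))
    · by_cases hzb : z = b
      · exact Or.inl (hzb ▸ (dρ2 b).resolve_right (mem_support.mp hb))
      · exact Or.inr (Equiv.swap_apply_of_ne_of_ne hza hzb)
  have e3 : Equiv.swap a b * c₃ = c₃ * Equiv.swap a b := by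
    refine (Perm.Disjoint.commute ?_).eq
    intro z
    by_cases hza : z = a
    · exact Or.inr (hza ▸ notMem_support.mp ha3)
    · by_cases hzb : z = b
      · exact Or.inr (hzb ▸ notMem_support.mp hb3)
      · exact Or.inl (Equiv.swap_apply_of_ne_of_ne hza hzb)
  have key : τ * σ = ρ * f := by
    rw [hτ, hσeq, hf, hg₁]
    simp only [mul_assoc]
    calc Equiv.swap a c * (Equiv.swap a b * (ρ * (c₃ * (c₂ * c₁))))
        = Equiv.swap a c * ((Equiv.swap a b * ρ) * (c₃ * (c₂ * c₁))) := by
          simp only [mul_assoc]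
      _ = Equiv.swap a c * ((ρ * Equiv.swap a b) * (c₃ * (c₂ * c₁))) := by rw [e2]
      _ = Equiv.swap a c * (ρ * ((Equiv.swap a b * c₃) * (c₂ * c₁))) := by
          simp only [mul_assoc]
      _ = Equiv.swap a c * (ρ * ((c₃ * Equiv.swap a b) * (c₂ * c₁))) := by rw [e3]
      _ = (Equiv.swap a c * ρ) * (c₃ * (Equiv.swap a b * (c₂ * c₁))) := by
          simp only [mul_assoc]
      _ = (ρ * Equiv.swap a c) * (c₃ * (Equiv.swap a b * (c₂ * c₁))) := by rw [← e1]
      _ = ρ * (Equiv.swap a c * (c₃ * (Equiv.swap a b * (c₂ * c₁)))) := by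
          simp only [mul_assoc]
  have dρf : Perm.Disjoint ρ f := by
    intro z
    by_cases hz : z ∈ f.support
    · rw [hfsup'] at hz
      rcases Finset.mem_union.mp hz with hz | hz
      · rcases Finset.mem_union.mp hz with hz | hz
        · exact Or.inl ((dρ1 z).resolve_right (mem_support.mp hz))
        · exact Or.inl ((dρ2 z).resolve_right (mem_support.mp hz))
      · exact Or.inl ((dρ3 z).resolve_right (mem_support.mp hz))
    · exact Or.inr (notMem_support.mp hz)
  refine ⟨f, hfcyc, hfsup', ?_⟩
  rw [key, dρf.cycleFactorsFinset_mul_eq_union, hρcf,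
    hfcyc.cycleFactorsFinset_eq_singleton, Finset.union_comm, ← Finset.insert_eq]
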